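/- (Convergence of value iteration for a stopping zero-sum stochastic game.) Let the game have p game elements, stage payoff matrices a^k, and transition probabilities q^{kl}_{ij} ≥ 0 with Σ_{l=1}^p q^{kl}_{ij} ≤ β for all k, i, j, where 0 ≤ β < 1, and let v ∈ ℝ^p be the unique vector satisfying v_k = val(B_k(v)) for all k. Define the recursion v^0 = (0,…,0) and v^{r+1}_k = val(B_k(v^r)), where B_k(u) has entries a^k_{ij} + Σ_{l=1}^p q^{kl}_{ij} u_l. Then v^r converges to v as r → ∞, i.e., max_k |v^r_k − v_k| → 0. -/

import Mathlib

open scoped BigOperators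

/-- Expected payoff to player 1 in the matrix game `B` when player 1 uses the
mixed strategy `y` and player 2 uses the mixed strategy `z`. -/
noncomputable def expectedPayoff {m n : ℕ} (B : Matrix (Fin m) (Fin n) ℝ)
    (y : Fin m → ℝ) (z : Fin n → ℝ) : ℝ :=
  ∑ i, ∑ j, y i * B i j * z j

/-- The value (in mixed strategies) of the zero-sum matrix game `B`:
`val(B) = sup_{y ∈ Δ_m} inf_{z ∈ Δ_n} ∑_{i,j} y_i B_{ij} z_j`. -/
noncomputable def matrixGameValue {m n : ℕ} (B : Matrix (Fin m) (Fin n) ℝ) : ℝ :=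
  ⨆ y : stdSimplex ℝ (Fin m), ⨅ z : stdSimplex ℝ (Fin n), expectedPayoff B y z

/-- The auxiliary matrix `B_k(v)` of a stochastic game, with entries
`b^k_{ij} = a^k_{ij} + ∑_l q^{kl}_{ij} v_l`. -/
noncomputable def gameElementMatrix {p : ℕ} {m n : Fin p → ℕ}
    (a : ∀ k, Matrix (Fin (m k)) (Fin (n k)) ℝ)
    (q : ∀ k, Fin (m k) → Fin (n k) → Fin p → ℝ)
    (v : Fin p → ℝ) (k : Fin p) : Matrix (Fin (m k)) (Fin (n k)) ℝ :=
  fun i j => a k i j + ∑ l, q k i j l * v l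

lemma simplex_nonempty {m : ℕ} (hm : 0 < m) : Nonempty (stdSimplex ℝ (Fin m)) := by
  refine ⟨⟨fun j => if j = ⟨0, hm⟩ then 1 else 0, ?_, ?_⟩⟩
  · intro x; dsimp; split <;> norm_num
  · simp

lemma comp_le_one {m : ℕ} {y : Fin m → ℝ} (hy : y ∈ stdSimplex ℝ (Fin m)) (i : Fin m) :
    y i ≤ 1 := by
  have := Finset.single_le_sum (f := y) (fun j _ => hy.1 j) (Finset.mem_univ i)
  rw [hy.2] at this; exact this

lemma abs_expectedPayoff_le {m n : ℕ} (B : Matrix (Fin m) (Fin n) ℝ)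
    {y : Fin m → ℝ} {z : Fin n → ℝ}
    (hy : y ∈ stdSimplex ℝ (Fin m)) (hz : z ∈ stdSimplex ℝ (Fin n)) :
    |expectedPayoff B y z| ≤ ∑ i, ∑ j, |B i j| := by
  unfold expectedPayoff
  calc |∑ i, ∑ j, y i * B i j * z j| ≤ ∑ i, ∑ j, |y i * B i j * z j| :=
        (Finset.abs_sum_le_sum_abs _ _).trans
          (Finset.sum_le_sum fun i _ => Finset.abs_sum_le_sum_abs _ _)
    _ ≤ ∑ i, ∑ j, |B i j| := by
        refine Finset.sum_le_sum fun i _ => Finset.sum_le_sum fun j _ => ?_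
        rw [abs_mul, abs_mul, abs_of_nonneg (hy.1 i), abs_of_nonneg (hz.1 j)]
        calc y i * |B i j| * z j ≤ y i * |B i j| * 1 :=
              mul_le_mul_of_nonneg_left (comp_le_one hz j)
                (mul_nonneg (hy.1 i) (abs_nonneg _))
          _ = y i * |B i j| := by ring
          _ ≤ 1 * |B i j| := mul_le_mul_of_nonneg_right (comp_le_one hy i) (abs_nonneg _)
          _ = |B i j| := one_mul _

lemma expectedPayoff_le_add {m n : ℕ} {B C : Matrix (Fin m) (Fin n) ℝ} {c : ℝ}
    (h : ∀ i j, B i j ≤ C i j + c)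
    {y : Fin m → ℝ} {z : Fin n → ℝ}
    (hy : y ∈ stdSimplex ℝ (Fin m)) (hz : z ∈ stdSimplex ℝ (Fin n)) :
    expectedPayoff B y z ≤ expectedPayoff C y z + c := by
  unfold expectedPayoff
  have key : ∑ i, ∑ j, y i * B i j * z j ≤ ∑ i, ∑ j, (y i * C i j * z j + y i * c * z j) := by
    refine Finset.sum_le_sum fun i _ => Finset.sum_le_sum fun j _ => ?_
    have := mul_le_mul_of_nonneg_right (mul_le_mul_of_nonneg_left (h i j) (hy.1 i)) (hz.1 j)
    calc y i * B i j * z j ≤ y i * (C i j + c) * z j := this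
      _ = y i * C i j * z j + y i * c * z j := by ring
  have hc : ∑ i, ∑ j, y i * c * z j = c := by
    calc ∑ i, ∑ j, y i * c * z j = ∑ i, (y i * c) * ∑ j, z j := by
          simp [Finset.mul_sum]
      _ = ∑ i, y i * c := by rw [hz.2]; simp
      _ = (∑ i, y i) * c := by rw [Finset.sum_mul]
      _ = c := by rw [hy.2, one_mul]
  have split : ∑ i, ∑ j, (y i * C i j * z j + y i * c * z j)
      = (∑ i, ∑ j, y i * C i j * z j) + ∑ i, ∑ j, y i * c * z j := by
    rw [← Finset.sum_add_distrib]
    exact Finset.sum_congr rfl fun i _ => by rw [Finset.sum_add_distrib]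
  rw [hc] at split
  linarith

lemma matrixGameValue_le_add {m n : ℕ} (hm : 0 < m) (hn : 0 < n)
    (B C : Matrix (Fin m) (Fin n) ℝ) (c : ℝ)
    (h : ∀ i j, B i j ≤ C i j + c) :
    matrixGameValue B ≤ matrixGameValue C + c := by
  have hym : Nonempty (stdSimplex ℝ (Fin m)) := simplex_nonempty hm
  have hzn : Nonempty (stdSimplex ℝ (Fin n)) := simplex_nonempty hn
  unfold matrixGameValue
  apply ciSup_le; intro y
  have hlbB : BddBelow (Set.range fun z : stdSimplex ℝ (Fin n) => expectedPayoff B y.1 z.1) := by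
    refine ⟨-(∑ i, ∑ j, |B i j|), ?_⟩
    rintro _ ⟨z, rfl⟩
    have := abs_expectedPayoff_le B y.2 z.2
    linarith [(abs_le.1 this).1]
  have hlbC : BddBelow (Set.range fun z : stdSimplex ℝ (Fin n) => expectedPayoff C y.1 z.1) := by
    refine ⟨-(∑ i, ∑ j, |C i j|), ?_⟩
    rintro _ ⟨z, rfl⟩
    have := abs_expectedPayoff_le C y.2 z.2
    linarith [(abs_le.1 this).1]
  have key : (⨅ z : stdSimplex ℝ (Fin n), expectedPayoff B y.1 z.1)
      ≤ (⨅ z : stdSimplex ℝ (Fin n), expectedPayoff C y.1 z.1) + c := by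
    rw [← sub_le_iff_le_add]
    apply le_ciInf; intro z
    have h1 : expectedPayoff B y.1 z.1 ≤ expectedPayoff C y.1 z.1 + c :=
      expectedPayoff_le_add h y.2 z.2
    have h2 := ciInf_le hlbB z
    linarith
  have hub : BddAbove (Set.range fun y' : stdSimplex ℝ (Fin m) =>
      ⨅ z : stdSimplex ℝ (Fin n), expectedPayoff C y'.1 z.1) := by
    refine ⟨∑ i, ∑ j, |C i j|, ?_⟩
    rintro _ ⟨y', rfl⟩
    obtain ⟨z0⟩ := hzn
    refine ciInf_le_of_le ?_ z0 ?_
    · refine ⟨-(∑ i, ∑ j, |C i j|), ?_⟩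
      rintro _ ⟨z, rfl⟩
      have := abs_expectedPayoff_le C y'.2 z.2
      linarith [(abs_le.1 this).1]
    · exact (abs_le.1 (abs_expectedPayoff_le C y'.2 z0.2)).2
  have := le_ciSup hub y
  exact le_trans key (add_le_add_left this c)
lemma val_contraction {p : ℕ} (hp : 0 < p) {m n : Fin p → ℕ}
    (hm : ∀ k, 0 < m k) (hn : ∀ k, 0 < n k)
    (a : ∀ k, Matrix (Fin (m k)) (Fin (n k)) ℝ)
    (q : ∀ k, Fin (m k) → Fin (n k) → Fin p → ℝ)
    (hq : ∀ k i j l, 0 ≤ q k i j l)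
    (β : ℝ) (hβ0 : 0 ≤ β)
    (hqβ : ∀ k i j, ∑ l, q k i j l ≤ β)
    (u v : Fin p → ℝ) (k : Fin p) :
    |matrixGameValue (gameElementMatrix a q u k) - matrixGameValue (gameElementMatrix a q v k)|
      ≤ β * ⨆ l, |u l - v l| := by
  have : Nonempty (Fin p) := ⟨⟨0, hp⟩⟩
  set M : ℝ := ⨆ l, |u l - v l| with hM
  have hMbdd : BddAbove (Set.range fun l => |u l - v l|) :=
    (Set.finite_range _).bddAbove
  have hMle : ∀ l, |u l - v l| ≤ M := fun l => le_ciSup hMbdd l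
  have hM0 : 0 ≤ M := le_trans (abs_nonneg _) (hMle (Classical.arbitrary _))
  have entry : ∀ (x y : Fin p → ℝ) i j,
      gameElementMatrix a q x k i j ≤ gameElementMatrix a q y k i j + β * (⨆ l, |x l - y l|) := by
    intro x y i j
    simp only [gameElementMatrix]
    have hbdd : BddAbove (Set.range fun l => |x l - y l|) := (Set.finite_range _).bddAbove
    have hle : ∀ l, |x l - y l| ≤ ⨆ l, |x l - y l| := fun l => le_ciSup hbdd l
    have h0 : 0 ≤ ⨆ l, |x l - y l| :=
      le_trans (abs_nonneg _) (hle (Classical.arbitrary _))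
    have step : ∑ l, q k i j l * (x l - y l) ≤ β * ⨆ l, |x l - y l| := by
      calc ∑ l, q k i j l * (x l - y l)
          ≤ ∑ l, q k i j l * |x l - y l| :=
            Finset.sum_le_sum fun l _ =>
              mul_le_mul_of_nonneg_left (le_abs_self _) (hq k i j l)
        _ ≤ ∑ l, q k i j l * ⨆ l', |x l' - y l'| :=
            Finset.sum_le_sum fun l _ =>
              mul_le_mul_of_nonneg_left (hle l) (hq k i j l)
        _ = (∑ l, q k i j l) * ⨆ l', |x l' - y l'| := by rw [← Finset.sum_mul]
        _ ≤ β * ⨆ l', |x l' - y l'| :=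
            mul_le_mul_of_nonneg_right (hqβ k i j) h0
    have expand : ∑ l, q k i j l * (x l - y l)
        = ∑ l, q k i j l * x l - ∑ l, q k i j l * y l := by
      rw [← Finset.sum_sub_distrib]
      exact Finset.sum_congr rfl fun l _ => by ring
    linarith
  have h1 := matrixGameValue_le_add (hm k) (hn k) _ _ (β * M) (entry u v)
  have h2' := matrixGameValue_le_add (hm k) (hn k) _ _ (β * (⨆ l, |v l - u l|)) (entry v u)
  have heq : (⨆ l, |v l - u l|) = M := by
    rw [hM]; congr 1; ext l; rw [abs_sub_comm]
  rw [heq] at h2'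
  rw [abs_sub_le_iff]
  constructor <;> linarith

/-- **Convergence of value iteration for a stopping zero-sum stochastic
game:** if `v` is the unique fixed point `v_k = val(B_k(v))` and the iterates
are `w 0 = 0`, `w (r+1) k = val(B_k(w r))`, then
`max_k |w r k − v k| → 0` as `r → ∞`. -/
theorem stochastic_game_value_iteration_tendsto
    (p : ℕ) (hp : 0 < p) (m n : Fin p → ℕ)
    (hm : ∀ k, 0 < m k) (hn : ∀ k, 0 < n k)
    (a : ∀ k, Matrix (Fin (m k)) (Fin (n k)) ℝ)
    (q : ∀ k, Fin (m k) → Fin (n k) → Fin p → ℝ)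
    (hq : ∀ k i j l, 0 ≤ q k i j l)
    (β : ℝ) (hβ0 : 0 ≤ β) (hβ1 : β < 1)
    (hqβ : ∀ k i j, ∑ l, q k i j l ≤ β)
    (v : Fin p → ℝ)
    (hv : ∀ k, v k = matrixGameValue (gameElementMatrix a q v k))
    (w : ℕ → Fin p → ℝ)
    (hw0 : w 0 = fun _ => 0)
    (hwsucc : ∀ r k, w (r + 1) k = matrixGameValue (gameElementMatrix a q (w r) k)) :
    Filter.Tendsto (fun r => ⨆ k, |w r k - v k|) Filter.atTop (nhds 0) := by
  have : Nonempty (Fin p) := ⟨⟨0, hp⟩⟩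
  set D : ℝ := ⨆ k, |w 0 k - v k| with hD
  have hDbdd : ∀ u : Fin p → ℝ, BddAbove (Set.range fun k => |u k - v k|) :=
    fun u => (Set.finite_range _).bddAbove
  have hD0 : 0 ≤ D := le_trans (abs_nonneg _) (le_ciSup (hDbdd _) (Classical.arbitrary _))
  have key : ∀ r k, |w r k - v k| ≤ β ^ r * D := by
    intro r
    induction r with
    | zero => intro k; simpa using le_ciSup (hDbdd (w 0)) k
    | succ r ih =>
      intro k
      rw [hwsucc r k, hv k]
      have h1 := val_contraction hp hm hn a q hq β hβ0 hqβ (w r) v k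
      have h2 : (⨆ l, |w r l - v l|) ≤ β ^ r * D := ciSup_le ih
      calc |matrixGameValue (gameElementMatrix a q (w r) k)
            - matrixGameValue (gameElementMatrix a q v k)|
          ≤ β * ⨆ l, |w r l - v l| := h1
        _ ≤ β * (β ^ r * D) := mul_le_mul_of_nonneg_left h2 hβ0
        _ = β ^ (r + 1) * D := by ring
  have hub : ∀ r, (⨆ k, |w r k - v k|) ≤ β ^ r * D := fun r => ciSup_le (key r)
  have hlb : ∀ r, 0 ≤ ⨆ k, |w r k - v k| := fun r =>
    le_trans (abs_nonneg _) (le_ciSup (hDbdd _) (Classical.arbitrary _))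
  have hg : Filter.Tendsto (fun r => β ^ r * D) Filter.atTop (nhds 0) := by
    simpa using (tendsto_pow_atTop_nhds_zero_of_lt_one hβ0 hβ1).mul_const D
  exact squeeze_zero hlb hub hg
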